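/- Every nonzero object X of C admits an SCSS: a nonzero strict subobject X' that is the final subobject of X of maximal slope (equivalently, X' is semistable and μ(X'') < μ(X') for every subobject X'' of X properly containing X'). -/

import Mathlib

open CategoryTheory Limits

universe v u v' u'

variable (C : Type u) [Category.{v} C] [Preadditive C] [HasZeroObject C]
  [HasBinaryBiproducts C]
variable (D : Type u') [Category.{v'} D] [Abelian D]
variable (F : C ⥤ D) [F.Additive] [F.Faithful]
variable (V : Type*) [AddCommGroup V] [LinearOrder V] [IsOrderedAddMonoid V]

/-- The data and axioms of abstract Harder–Narasimhan theory:
an exact structure on `C` (given by its class of short strict exact sequences),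
an exact faithful functor `F : C ⥤ D` inducing bijections between strict
subobjects and subobjects of the image, a rank function on `D` and a degree
function on `C`. -/
structure HNTheory where
  /-- `SSE f g` means `0 ⟶ A ⟶ B ⟶ Z ⟶ 0` is a short strict exact sequence. -/
  SSE : ∀ ⦃A B Z : C⦄, (A ⟶ B) → (B ⟶ Z) → Prop
  sse_comp_zero : ∀ ⦃A B Z : C⦄ (f : A ⟶ B) (g : B ⟶ Z), SSE f g → f ≫ g = 0
  sse_mono : ∀ ⦃A B Z : C⦄ (f : A ⟶ B) (g : B ⟶ Z), SSE f g → Mono f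
  sse_epi : ∀ ⦃A B Z : C⦄ (f : A ⟶ B) (g : B ⟶ Z), SSE f g → Epi g
  sse_isKernel : ∀ ⦃A B Z : C⦄ (f : A ⟶ B) (g : B ⟶ Z) (hfg : SSE f g),
    Nonempty (IsLimit (KernelFork.ofι f (sse_comp_zero f g hfg)))
  sse_isCokernel : ∀ ⦃A B Z : C⦄ (f : A ⟶ B) (g : B ⟶ Z) (hfg : SSE f g),
    Nonempty (IsColimit (CokernelCofork.ofπ g (sse_comp_zero f g hfg)))
  /-- `F` is exact. -/
  F_exact : ∀ ⦃A B Z : C⦄ (f : A ⟶ B) (g : B ⟶ Z) (hfg : SSE f g),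
    (ShortComplex.mk (F.map f) (F.map g)
      (by rw [← F.map_comp, sse_comp_zero f g hfg, F.map_zero])).ShortExact
  /-- `F` induces a bijection between strict subobjects of `X` and subobjects
  of `F(X)`. -/
  strict_sub_bij : ∀ X : C,
    Function.Bijective
      (fun S : {S : Subobject X // ∃ (Z : C) (g : X ⟶ Z), SSE S.arrow g} =>
        imageSubobject (F.map S.1.arrow))
  rk : D → ℕ
  rk_iso : ∀ ⦃X Y : D⦄, (X ≅ Y) → rk X = rk Y
  rk_eq_zero_iff : ∀ X : D, rk X = 0 ↔ IsZero X
  rk_additive : ∀ (S : ShortComplex D), S.ShortExact → rk S.X₂ = rk S.X₁ + rk S.X₃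
  deg : C → V
  deg_iso : ∀ ⦃X Y : C⦄, (X ≅ Y) → deg X = deg Y
  deg_additive : ∀ ⦃A B Z : C⦄ (f : A ⟶ B) (g : B ⟶ Z), SSE f g → deg B = deg A + deg Z
  deg_le_of_FIso : ∀ ⦃X Y : C⦄ (f : X ⟶ Y), IsIso (F.map f) → deg X ≤ deg Y
  deg_eq_iff_of_FIso : ∀ ⦃X Y : C⦄ (f : X ⟶ Y), IsIso (F.map f) → (deg X = deg Y ↔ IsIso f)

namespace HNTheory

variable {C D F V}

/-- The subobject `F(X') ⊆ F(X)` associated to a subobject `X' ⊆ X`. -/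
noncomputable def FSub (_h : HNTheory C D F V) {X : C} (S : Subobject X) :
    Subobject (F.obj X) :=
  imageSubobject (F.map S.arrow)

variable (h : HNTheory C D F V)

/-- The rank of an object of `C` is the rank of its image in `D`. -/
def rkC (X : C) : ℕ := h.rk (F.obj X)

/-- A subobject is strict if it is an admissible (strict) monomorphism,
i.e. fits in a short strict exact sequence. -/
def StrictSub {X : C} (S : Subobject X) : Prop :=
  ∃ (Z : C) (g : X ⟶ Z), h.SSE S.arrow g

/-- `μ(X) ≤ μ(Y)`, in cross-multiplied form `rk(Y) • deg(X) ≤ rk(X) • deg(Y)`. -/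
def muLE (X Y : C) : Prop := h.rkC Y • h.deg X ≤ h.rkC X • h.deg Y

/-- `μ(X) < μ(Y)`, in cross-multiplied form. -/
def muLT (X Y : C) : Prop := h.rkC Y • h.deg X < h.rkC X • h.deg Y

/-- `μ(X) = μ(Y)`, in cross-multiplied form. -/
def muEQ (X Y : C) : Prop := h.rkC Y • h.deg X = h.rkC X • h.deg Y

/-- A nonzero object is semistable if every nonzero proper subobject has
slope at most that of the ambient object. -/
def Semistable (X : C) : Prop :=
  ¬ IsZero X ∧ ∀ S : Subobject X, ¬ IsZero ((S : C)) → S ≠ ⊤ → h.muLE (S : C) X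

/-- A subobject of maximal slope. -/
def MaxSlopeSub {X : C} (S : Subobject X) : Prop :=
  ¬ IsZero ((S : C)) ∧ ∀ T : Subobject X, ¬ IsZero ((T : C)) → h.muLE (T : C) (S : C)

/-- `G` is (a model of) the `i`-th graded piece `c i.succ / c i.castSucc` of a
filtration `c` by strict subobjects. -/
def GrAt {X : C} {N : ℕ} (c : Fin (N + 1) → Subobject X) (i : Fin N) (G : C) : Prop :=
  ∃ (hle : c i.castSucc ≤ c i.succ) (p : ((c i.succ : Subobject X) : C) ⟶ G),
    h.SSE (Subobject.ofLE (c i.castSucc) (c i.succ) hle) p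

/-- `c` is a Harder–Narasimhan filtration. -/
def IsHNFilt {X : C} {N : ℕ} (c : Fin (N + 1) → Subobject X) : Prop :=
  StrictMono c ∧ c 0 = ⊥ ∧ c (Fin.last N) = ⊤ ∧ (∀ i, h.StrictSub (c i)) ∧
  (∀ (i : Fin N) (G : C), h.GrAt c i G → h.Semistable G) ∧
  (∀ (i j : Fin N), i < j → ∀ (Gi Gj : C),
    h.GrAt c i Gi → h.GrAt c j Gj → h.muLT Gj Gi)

end HNTheory

section ArithHelpers

variable {V : Type*} [AddCommGroup V] [LinearOrder V] [IsOrderedAddMonoid V]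

lemma HN.nsmul_cancel_le {n : ℕ} (hn : n ≠ 0) {a b : V} (h : n • a ≤ n • b) : a ≤ b :=
  le_of_nsmul_le_nsmul_right hn h

lemma HN.nsmul_cancel_lt {n : ℕ} {a b : V} (h : n • a < n • b) : a < b := by
  by_contra hc
  exact absurd (nsmul_le_nsmul_right (not_lt.1 hc) n) (not_le.2 h)

lemma HN.nsmul_rot {m n : ℕ} {a : V} : m • n • a = n • m • a := by
  rw [← mul_smul, Nat.mul_comm, mul_smul]

lemma HN.muLE_trans {ra rb rc : ℕ} {da db dc : V} (hb : rb ≠ 0)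
    (h1 : rb • da ≤ ra • db) (h2 : rc • db ≤ rb • dc) : rc • da ≤ ra • dc := by
  apply HN.nsmul_cancel_le hb
  calc rb • rc • da = rc • rb • da := HN.nsmul_rot
    _ ≤ rc • (ra • db) := nsmul_le_nsmul_right h1 rc
    _ = ra • rc • db := HN.nsmul_rot
    _ ≤ ra • rb • dc := nsmul_le_nsmul_right h2 ra
    _ = rb • ra • dc := HN.nsmul_rot

lemma HN.muLT_of_lt_le {ra rb rc : ℕ} {da db dc : V} (hb : rb ≠ 0) (hc : rc ≠ 0)
    (h1 : rb • da < ra • db) (h2 : rc • db ≤ rb • dc) : rc • da < ra • dc := by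
  apply HN.nsmul_cancel_lt (n := rb)
  calc rb • rc • da = rc • rb • da := HN.nsmul_rot
    _ < rc • (ra • db) := nsmul_lt_nsmul_right hc h1
    _ = ra • rc • db := HN.nsmul_rot
    _ ≤ ra • rb • dc := nsmul_le_nsmul_right h2 ra
    _ = rb • ra • dc := HN.nsmul_rot

lemma HN.muLT_of_le_lt {ra rb rc : ℕ} {da db dc : V} (ha : ra ≠ 0) (hb : rb ≠ 0)
    (h1 : rb • da ≤ ra • db) (h2 : rc • db < rb • dc) : rc • da < ra • dc := by
  apply HN.nsmul_cancel_lt (n := rb)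
  calc rb • rc • da = rc • rb • da := HN.nsmul_rot
    _ ≤ rc • (ra • db) := nsmul_le_nsmul_right h1 rc
    _ = ra • rc • db := HN.nsmul_rot
    _ < ra • rb • dc := nsmul_lt_nsmul_right ha h2
    _ = rb • ra • dc := HN.nsmul_rot

/-- μ(QJ) ≤ μ(S), given μJ < μA ≤ μS and J = A + QJ. -/
lemma HN.arith2 {rA rS rq : ℕ} {dA dS dq dJ : V}
    (hA : rA ≠ 0) (hS : rS ≠ 0)
    (hJd : dJ = dA + dq)
    (hJlt : rA • dJ < (rA + rq) • dA)
    (hAS : rS • dA ≤ rA • dS) :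
    rS • dq ≤ rq • dS := by
  have h1 : rA • dq < rq • dA := by
    have := hJlt
    rw [hJd, smul_add, add_smul] at this
    exact lt_of_add_lt_add_left this
  apply HN.nsmul_cancel_le hA
  calc rA • rS • dq = rS • rA • dq := HN.nsmul_rot
    _ ≤ rS • rq • dA := nsmul_le_nsmul_right h1.le rS
    _ = rq • rS • dA := HN.nsmul_rot
    _ ≤ rq • rA • dS := nsmul_le_nsmul_right hAS rq
    _ = rA • rq • dS := HN.nsmul_rot

/-- μT ≤ μS given T an extension of QT by M with μM ≤ μS, μQJ ≤ μS, dQT ≤ dQJ, rQT = rQJ. -/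
lemma HN.arith1 {rS rM rq rT : ℕ} {dS dM dT dQT dQJ : V}
    (hrT : rT = rM + rq) (hdT : dT = dM + dQT)
    (hQ : dQT ≤ dQJ)
    (hq : rS • dQJ ≤ rq • dS)
    (hM : rS • dM ≤ rM • dS) :
    rS • dT ≤ rT • dS := by
  rw [hdT, hrT, smul_add, add_smul]
  have h1 : rS • dQT ≤ rq • dS := le_trans (nsmul_le_nsmul_right hQ rS) hq
  exact add_le_add hM h1

/-- From μT' = μS, μM ≤ μS, T' = M + Q, dQT ≤ dQJ, rQT = rQJ =: rq, conclude rq • dS ≤ rS • dQJ. -/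
lemma HN.arith3 {rS rM rq rT : ℕ} {dS dM dT dQT dQJ : V}
    (hrT : rT = rM + rq) (hdT : dT = dM + dQT)
    (hQ : dQT ≤ dQJ)
    (heq : rS • dT = rT • dS)
    (hM : rS • dM ≤ rM • dS) :
    rq • dS ≤ rS • dQJ := by
  have h1 : rS • dM + rS • dQT = rM • dS + rq • dS := by
    rw [← smul_add, ← hdT, heq, hrT, add_smul]
  have h2 : rq • dS ≤ rS • dQT := by
    have := add_le_add_left hM (rS • dQT)
    rw [h1] at this
    exact le_of_add_le_add_left this
  exact le_trans h2 (nsmul_le_nsmul_right hQ rS)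

end ArithHelpers
set_option linter.unusedSectionVars false

namespace HNTheory

variable {C D F V}

section Basics

lemma isZero_of_isZero_F {A : C} (hz : IsZero (F.obj A)) : IsZero A := by
  rw [IsZero.iff_id_eq_zero] at hz ⊢
  apply F.map_injective
  rw [F.map_id, F.map_zero, hz]

lemma isZero_F_of_isZero {A : C} (hz : IsZero A) : IsZero (F.obj A) := by
  rw [IsZero.iff_id_eq_zero] at hz ⊢
  rw [← F.map_id, hz, F.map_zero]

variable (h : HNTheory C D F V)

lemma rkC_eq_zero_iff {A : C} : h.rkC A = 0 ↔ IsZero A :=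
  (h.rk_eq_zero_iff _).trans ⟨isZero_of_isZero_F, isZero_F_of_isZero⟩

lemma rkC_ne_zero {A : C} (hA : ¬ IsZero A) : h.rkC A ≠ 0 :=
  fun e => hA (h.rkC_eq_zero_iff.1 e)

lemma not_isZero_of_rkC {A : C} (hA : h.rkC A ≠ 0) : ¬ IsZero A :=
  fun e => hA (h.rkC_eq_zero_iff.2 e)

lemma rkC_iso {A B : C} (e : A ≅ B) : h.rkC A = h.rkC B := h.rk_iso (F.mapIso e)

lemma sse_rkC {A B Z : C} {f : A ⟶ B} {g : B ⟶ Z} (hfg : h.SSE f g) :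
    h.rkC B = h.rkC A + h.rkC Z := h.rk_additive _ (h.F_exact f g hfg)

lemma sse_g_isIso {A B Z : C} {f : A ⟶ B} {g : B ⟶ Z} (hfg : h.SSE f g) (hA : IsZero A) :
    IsIso g := by
  obtain ⟨hc⟩ := h.sse_isCokernel f g hfg
  obtain ⟨w, hw⟩ := CokernelCofork.IsColimit.desc' hc (𝟙 B)
    (by rw [hA.eq_of_src f 0, zero_comp])
  simp only [Cofork.π_ofπ] at hw
  have hepi : Epi g := h.sse_epi f g hfg
  have hwg : w ≫ g = 𝟙 Z := by
    rw [← cancel_epi g, ← Category.assoc, hw, Category.id_comp, Category.comp_id]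
  exact ⟨w, hw, hwg⟩

lemma sse_f_isIso {A B Z : C} {f : A ⟶ B} {g : B ⟶ Z} (hfg : h.SSE f g) (hZ : IsZero Z) :
    IsIso f := by
  obtain ⟨hk⟩ := h.sse_isKernel f g hfg
  obtain ⟨l, hl⟩ := KernelFork.IsLimit.lift' hk (𝟙 B)
    (by rw [hZ.eq_of_tgt g 0, comp_zero])
  simp only [Fork.ι_ofι] at hl
  have hmono : Mono f := h.sse_mono f g hfg
  have hfl : f ≫ l = 𝟙 A := by
    rw [← cancel_mono f, Category.assoc, hl, Category.comp_id, Category.id_comp]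
  exact ⟨l, hfl, hl⟩

variable {X : C}

lemma exists_strict (y : Subobject (F.obj X)) :
    ∃ S : Subobject X, h.StrictSub S ∧ h.FSub S = y := by
  obtain ⟨⟨S, hS⟩, hy⟩ := (h.strict_sub_bij X).2 y
  exact ⟨S, hS, hy⟩

lemma strict_mono_F_arrow {S : Subobject X} (hS : h.StrictSub S) : Mono (F.map S.arrow) := by
  obtain ⟨Z, g, hfg⟩ := hS
  exact (h.F_exact _ _ hfg).mono_f

lemma FSub_def {Y : C} (S : Subobject Y) : h.FSub S = imageSubobject (F.map S.arrow) := rfl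

lemma FSub_mk {A : C} (m : A ⟶ X) [Mono m] :
    h.FSub (Subobject.mk m) = imageSubobject (F.map m) := by
  show imageSubobject (F.map (Subobject.mk m).arrow) = _
  rw [← Subobject.underlyingIso_hom_comp_eq_mk m, F.map_comp]
  exact imageSubobject_iso_comp _ _

lemma FSub_le_of_le {T T' : Subobject X} (hle : T ≤ T') : h.FSub T ≤ h.FSub T' := by
  have harr : T.arrow = Subobject.ofLE T T' hle ≫ T'.arrow := (Subobject.ofLE_arrow hle).symm
  show imageSubobject (F.map T.arrow) ≤ imageSubobject (F.map T'.arrow)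
  rw [harr, F.map_comp]
  exact imageSubobject_comp_le _ _

/-- If `S` is strict and `F(T) ⊆ F(S)` then `T` factors through `S`. -/
lemma factor_of_FSub_le {T S : Subobject X} (hS : h.StrictSub S) (hle : h.FSub T ≤ h.FSub S) :
    ∃ l : (T : C) ⟶ (S : C), l ≫ S.arrow = T.arrow := by
  obtain ⟨Z, g, hfg⟩ := hS
  haveI hm : Mono (F.map S.arrow) := (h.F_exact _ _ hfg).mono_f
  rw [h.FSub_def T, h.FSub_def S, imageSubobject_mono (F.map S.arrow)] at hle
  -- build w : F T → F S with w ≫ F S.arrow = F T.arrow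
  set w : F.obj (T : C) ⟶ F.obj (S : C) :=
    factorThruImageSubobject (F.map T.arrow) ≫ Subobject.ofLEMk _ _ hle with hwdef
  have hw : w ≫ F.map S.arrow = F.map T.arrow := by
    rw [hwdef, Category.assoc, Subobject.ofLEMk_comp, imageSubobject_arrow_comp]
  have hz : T.arrow ≫ g = 0 := by
    apply F.map_injective
    rw [F.map_comp, F.map_zero, ← hw, Category.assoc, ← F.map_comp,
      h.sse_comp_zero S.arrow g hfg, F.map_zero, comp_zero]
  obtain ⟨hk⟩ := h.sse_isKernel S.arrow g hfg
  obtain ⟨l, hl⟩ := KernelFork.IsLimit.lift' hk T.arrow hz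
  simp only [Fork.ι_ofι] at hl
  exact ⟨l, hl⟩

lemma le_of_FSub_le {T S : Subobject X} (hS : h.StrictSub S) (hle : h.FSub T ≤ h.FSub S) :
    T ≤ S := by
  obtain ⟨l, hl⟩ := h.factor_of_FSub_le hS hle
  exact Subobject.le_of_comm l hl

lemma strict_eq_of_FSub_eq {S S' : Subobject X} (hS : h.StrictSub S) (hS' : h.StrictSub S')
    (he : h.FSub S = h.FSub S') : S = S' :=
  le_antisymm (h.le_of_FSub_le hS' he.le) (h.le_of_FSub_le hS he.ge)

end Basics

end HNTheory
namespace HNTheory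

variable {C D F V}

section ImgHelpers

lemma img_epi_comp {P Q R : D} (e : P ⟶ Q) [Epi e] (f : Q ⟶ R) :
    imageSubobject (e ≫ f) = imageSubobject f := by
  have hle := imageSubobject_comp_le e f
  haveI hepi : Epi (Subobject.ofLE _ _ hle) := imageSubobject_comp_le_epi_of_epi e f
  haveI hmono : Mono (Subobject.ofLE _ _ hle) := mono_of_mono_fac (Subobject.ofLE_arrow hle)
  haveI : IsIso (Subobject.ofLE _ _ hle) := isIso_of_mono_of_epi _
  refine le_antisymm hle (Subobject.le_of_comm (inv (Subobject.ofLE _ _ hle)) ?_)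
  rw [IsIso.inv_comp_eq, Subobject.ofLE_arrow]

lemma img_fact {P Q R : D} (u : P ⟶ Q) (m : Q ⟶ R) :
    imageSubobject (u ≫ m) = imageSubobject ((imageSubobject u).arrow ≫ m) := by
  conv_lhs => rw [← imageSubobject_arrow_comp u]
  rw [Category.assoc]
  exact img_epi_comp _ _

lemma img_comp_mono_congr {P P' Q R : D} (u : P ⟶ Q) (u' : P' ⟶ Q) (m : Q ⟶ R)
    (he : imageSubobject u = imageSubobject u') :
    imageSubobject (u ≫ m) = imageSubobject (u' ≫ m) := by
  rw [img_fact u m, img_fact u' m]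
  have hco : (Subobject.isoOfEq _ _ he).hom ≫ (imageSubobject u').arrow
      = (imageSubobject u).arrow := by
    simp [Subobject.isoOfEq]
  rw [← hco, Category.assoc]
  exact imageSubobject_iso_comp _ _

end ImgHelpers

section MoreBasics

variable (h : HNTheory C D F V) {X : C}

lemma strict_top : h.StrictSub (⊤ : Subobject X) := by
  obtain ⟨S, hS, hFS⟩ := h.exists_strict (X := X) ⊤
  suffices he : S = ⊤ by rwa [he] at hS
  rw [← Subobject.isIso_arrow_iff_eq_top]
  obtain ⟨Z, g, hfg⟩ := hS
  haveI hm : Mono (F.map S.arrow) := (h.F_exact _ _ hfg).mono_f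
  haveI harr : Epi ((imageSubobject (F.map S.arrow)).arrow) := by
    rw [show imageSubobject (F.map S.arrow) = ⊤ from hFS]
    infer_instance
  haveI hepi : Epi (F.map S.arrow) := by
    rw [← imageSubobject_arrow_comp (F.map S.arrow)]
    exact epi_comp _ _
  have hg0 : F.map g = 0 := by
    have h2 : F.map S.arrow ≫ F.map g = 0 := by
      rw [← F.map_comp, h.sse_comp_zero S.arrow g hfg, F.map_zero]
    exact (cancel_epi (F.map S.arrow)).1 (by rw [h2, comp_zero])
  have hZ : IsZero Z := by
    apply isZero_of_isZero_F (F := F)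
    haveI := (h.F_exact _ _ hfg).epi_g
    rw [IsZero.iff_id_eq_zero]
    apply (cancel_epi (F.map g)).1
    rw [Category.comp_id, comp_zero, hg0]
  exact h.sse_f_isIso hfg hZ

lemma deg_of_isZero {A : C} (hA : IsZero A) : h.deg A = 0 := by
  obtain ⟨S, hS, hFS⟩ := h.exists_strict (X := A) ⊥
  have hSz : IsZero ((S : C)) := by
    apply isZero_of_isZero_F (F := F)
    haveI hm : Mono (F.map S.arrow) := h.strict_mono_F_arrow hS
    have he : Subobject.mk (F.map S.arrow) = ⊥ := by
      rw [← imageSubobject_mono (F.map S.arrow)]; exact hFS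
    exact IsZero.of_iso (isZero_zero D)
      ((Subobject.underlyingIso (F.map S.arrow)).symm ≪≫ Subobject.isoOfEq _ _ he ≪≫
        Subobject.botCoeIsoZero)
  obtain ⟨Z, g, hfg⟩ := hS
  haveI := h.sse_g_isIso hfg hSz
  have h1 : h.deg A = h.deg (S : C) + h.deg Z := h.deg_additive _ _ hfg
  have h2 : h.deg A = h.deg Z := h.deg_iso (asIso g)
  rw [← h2] at h1
  have h3 : h.deg (S : C) = 0 := (right_eq_add.1 h1)
  rw [h.deg_iso (hA.isoZero ≪≫ hSz.isoZero.symm), h3]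

/-- Saturation of a subobject. -/
lemma exists_sat (T : Subobject X) :
    ∃ S : Subobject X, h.StrictSub S ∧ T ≤ S ∧ h.rkC ((T : C)) = h.rkC ((S : C)) ∧
      h.deg ((T : C)) ≤ h.deg ((S : C)) := by
  obtain ⟨S, hS, hFS⟩ := h.exists_strict (h.FSub T)
  obtain ⟨l, hl⟩ := h.factor_of_FSub_le hS hFS.ge
  haveI hmono_l : Mono l := mono_of_mono_fac hl
  obtain ⟨K, hK, hFK⟩ := h.exists_strict (X := (T : C)) (kernelSubobject (F.map l))
  have hK0 : K.arrow ≫ l = 0 := by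
    apply F.map_injective
    rw [F.map_comp, F.map_zero, ← imageSubobject_arrow_comp (F.map K.arrow), Category.assoc]
    have hz : (imageSubobject (F.map K.arrow)).arrow ≫ F.map l = 0 := by
      rw [show imageSubobject (F.map K.arrow) = kernelSubobject (F.map l) from hFK]
      exact kernelSubobject_arrow_comp _
    rw [hz, comp_zero]
  have hKz : IsZero ((K : C)) := by
    have hKa : K.arrow = 0 := zero_of_comp_mono l hK0
    rw [IsZero.iff_id_eq_zero]
    apply (cancel_mono K.arrow).1
    rw [hKa, comp_zero, comp_zero]
  have hker : kernelSubobject (F.map l) = ⊥ := by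
    rw [← hFK, h.FSub_def]
    have hz : F.map K.arrow = 0 := (isZero_F_of_isZero hKz).eq_of_src _ 0
    rw [hz]
    exact imageSubobject_zero
  haveI hFl_mono : Mono (F.map l) := by
    rw [Preadditive.mono_iff_cancel_zero]
    intro W v hv
    rw [← factorThruKernelSubobject_comp_arrow (F.map l) v hv]
    have hz : (kernelSubobject (F.map l)).arrow = 0 := by rw [hker]; exact Subobject.bot_arrow
    rw [hz, comp_zero]
  haveI hSm : Mono (F.map S.arrow) := h.strict_mono_F_arrow hS
  haveI hFl_epi : Epi (F.map l) := by
    have e1 : imageSubobject (F.map T.arrow) = imageSubobject (F.map S.arrow) := hFS.symm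
    set ψ : F.obj ((T : C)) ⟶ F.obj ((S : C)) :=
      factorThruImageSubobject (F.map T.arrow) ≫ (Subobject.isoOfEq _ _ e1).hom ≫
        (Subobject.isoOfEqMk _ _ (imageSubobject_mono (F.map S.arrow))).hom with hψdef
    have hψ : ψ ≫ F.map S.arrow = F.map T.arrow := by
      simp only [hψdef, Category.assoc, Subobject.isoOfEqMk_hom, Subobject.ofLEMk_comp,
        Subobject.isoOfEq_hom, Subobject.ofLE_arrow, imageSubobject_arrow_comp]
    have heq : ψ = F.map l := by
      rw [← cancel_mono (F.map S.arrow), hψ, ← F.map_comp, hl]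
    rw [← heq, hψdef]
    exact epi_comp _ _
  haveI : IsIso (F.map l) := isIso_of_mono_of_epi _
  exact ⟨S, hS, Subobject.le_of_comm l hl, h.rk_iso (asIso (F.map l)),
    h.deg_le_of_FIso l inferInstance⟩

end MoreBasics

end HNTheory
namespace HNTheory

variable {C D F V}
variable (h : HNTheory C D F V) {X : C}

/-- Composition of strict subobjects is strict. -/
lemma strict_comp {A' : Subobject X} (hA : h.StrictSub A') (N : Subobject ((A' : C)))
    (hN : h.StrictSub N) : h.StrictSub (Subobject.mk (N.arrow ≫ A'.arrow)) := by
  obtain ⟨S, hS, hFS⟩ := h.exists_strict (imageSubobject (F.map (N.arrow ≫ A'.arrow)))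
  suffices he : S = Subobject.mk (N.arrow ≫ A'.arrow) by rwa [he] at hS
  haveI hNm : Mono (F.map N.arrow) := h.strict_mono_F_arrow hN
  haveI hAm : Mono (F.map A'.arrow) := h.strict_mono_F_arrow hA
  haveI hmm : Mono (F.map (N.arrow ≫ A'.arrow)) := by
    rw [F.map_comp]; exact mono_comp _ _
  have hle1 : Subobject.mk (N.arrow ≫ A'.arrow) ≤ S :=
    h.le_of_FSub_le hS (by rw [h.FSub_mk]; exact hFS.ge)
  have hSA : S ≤ A' := by
    refine h.le_of_FSub_le hA (le_trans (le_of_eq hFS) ?_)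
    rw [F.map_comp]
    exact imageSubobject_comp_le _ _
  obtain ⟨Z, q, hq⟩ := hN
  -- factor F.map S.arrow through F.map (N.arrow ≫ A'.arrow)
  have hle' : imageSubobject (F.map S.arrow) ≤ Subobject.mk (F.map (N.arrow ≫ A'.arrow)) := by
    rw [← imageSubobject_mono (F.map (N.arrow ≫ A'.arrow))]
    exact le_of_eq hFS
  set u : F.obj ((S : C)) ⟶ F.obj ((N : C)) :=
    factorThruImageSubobject (F.map S.arrow) ≫ Subobject.ofLEMk _ _ hle' with hudef
  have hu : u ≫ F.map (N.arrow ≫ A'.arrow) = F.map S.arrow := by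
    rw [hudef, Category.assoc, Subobject.ofLEMk_comp, imageSubobject_arrow_comp]
  set j := Subobject.ofLE S A' hSA with hjdef
  have hj2 : F.map j = u ≫ F.map N.arrow := by
    apply (cancel_mono (F.map A'.arrow)).1
    rw [← F.map_comp, hjdef, Subobject.ofLE_arrow, Category.assoc, ← F.map_comp, ← hu,
      F.map_comp]
  have hjq : j ≫ q = 0 := by
    apply F.map_injective
    rw [F.map_comp, F.map_zero, hj2, Category.assoc, ← F.map_comp,
      h.sse_comp_zero N.arrow q hq, F.map_zero, comp_zero]
  obtain ⟨hk⟩ := h.sse_isKernel N.arrow q hq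
  obtain ⟨t, ht⟩ := KernelFork.IsLimit.lift' hk j hjq
  simp only [Fork.ι_ofι] at ht
  have hle2 : S ≤ Subobject.mk (N.arrow ≫ A'.arrow) := by
    apply Subobject.le_mk_of_comm t
    rw [← Category.assoc, ht, hjdef, Subobject.ofLE_arrow]
  exact le_antisymm hle2 hle1

/-- A strict subobject contained in a strict subobject `A'` comes from a strict
subobject of the object underlying `A'`. -/
lemma exists_rel {M' A' : Subobject X} (hM : h.StrictSub M') (hA : h.StrictSub A')
    (hle : M' ≤ A') :
    ∃ N : Subobject ((A' : C)), h.StrictSub N ∧ Subobject.mk (N.arrow ≫ A'.arrow) = M' := by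
  haveI : Mono (Subobject.ofLE M' A' hle) := mono_of_mono_fac (Subobject.ofLE_arrow hle)
  obtain ⟨N, hN, hFN⟩ := h.exists_strict (X := (A' : C))
    (imageSubobject (F.map (Subobject.ofLE M' A' hle)))
  have hstrict := h.strict_comp hA N hN
  refine ⟨N, hN, h.strict_eq_of_FSub_eq hstrict hM ?_⟩
  rw [h.FSub_mk, h.FSub_def M']
  have hMarr : M'.arrow = Subobject.ofLE M' A' hle ≫ A'.arrow := (Subobject.ofLE_arrow hle).symm
  rw [hMarr, F.map_comp, F.map_comp]
  exact img_comp_mono_congr _ _ _ hFN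

/-- Degree and rank of a strict subobject pair, via the quotient. -/
lemma rel_facts {M' A' : Subobject X} (hM : h.StrictSub M') (hA : h.StrictSub A')
    (hle : M' ≤ A') :
    ∃ Q : C, h.deg ((A' : C)) = h.deg ((M' : C)) + h.deg Q ∧
      h.rkC ((A' : C)) = h.rkC ((M' : C)) + h.rkC Q ∧ (M' ≠ A' → ¬ IsZero Q) := by
  obtain ⟨N, hN, heq⟩ := h.exists_rel hM hA hle
  obtain ⟨Z, q, hq⟩ := hN
  have hiso : ((N : C) : C) ≅ ((M' : C)) :=
    (Subobject.underlyingIso (N.arrow ≫ A'.arrow)).symm ≪≫ Subobject.isoOfEq _ _ heq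
  refine ⟨Z, ?_, ?_, ?_⟩
  · rw [h.deg_additive _ _ hq, h.deg_iso hiso]
  · rw [h.sse_rkC hq, h.rkC_iso hiso]
  · intro hne hz
    haveI := h.sse_f_isIso hq hz
    have h2 : Subobject.mk (N.arrow ≫ A'.arrow) = Subobject.mk A'.arrow :=
      Subobject.mk_eq_mk_of_comm _ _ (asIso N.arrow) rfl
    rw [Subobject.mk_arrow] at h2
    exact hne (heq.symm.trans h2)

lemma rkC_le_of_le {M' A' : Subobject X} (hM : h.StrictSub M') (hA : h.StrictSub A')
    (hle : M' ≤ A') : h.rkC ((M' : C)) ≤ h.rkC ((A' : C)) := by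
  obtain ⟨Q, _, hrk, _⟩ := h.rel_facts hM hA hle
  omega

lemma rkC_lt_of_lt {M' A' : Subobject X} (hM : h.StrictSub M') (hA : h.StrictSub A')
    (hlt : M' < A') : h.rkC ((M' : C)) < h.rkC ((A' : C)) := by
  obtain ⟨Q, _, hrk, hQZ⟩ := h.rel_facts hM hA hlt.le
  have hne : h.rkC Q ≠ 0 := h.rkC_ne_zero (hQZ hlt.ne)
  omega

end HNTheory
namespace HNTheory

variable {C D F V}

lemma mk_factors' {Y Xd Z : D} (f : Y ⟶ Xd) [Mono f] (g : Z ⟶ Xd) (u : Z ⟶ Y)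
    (hu : u ≫ f = g) : (Subobject.mk f).Factors g :=
  (Subobject.mk_factors_iff f g).2 ⟨u, hu⟩

lemma mk_factors_elim {Y Xd Z : D} (f : Y ⟶ Xd) [Mono f] (g : Z ⟶ Xd)
    (hf : (Subobject.mk f).Factors g) : ∃ u : Z ⟶ Y, u ≫ f = g :=
  ⟨Subobject.factorThru _ _ hf ≫ (Subobject.underlyingIso f).hom, by
    rw [Category.assoc, Subobject.underlyingIso_hom_comp_eq_mk, Subobject.factorThru_arrow]⟩

variable (h : HNTheory C D F V) {X : C}

/-- The key comparison: a model of `T'/M' ⟶ J'/A'` which is an `F`-isomorphism when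
`J' = A' ⊔ T'` and `M' = A' ⊓ T'` on the `D`-side. -/
lemma quot_compare {A' T' J' M' : Subobject X}
    (hA : h.StrictSub A') (hT : h.StrictSub T') (hJ : h.StrictSub J') (hM : h.StrictSub M')
    (hAJ : A' ≤ J') (hTJ : T' ≤ J') (hMA : M' ≤ A') (hMT : M' ≤ T')
    (hsup : h.FSub A' ⊔ h.FSub T' = h.FSub J')
    (hinf : h.FSub A' ⊓ h.FSub T' = h.FSub M') :
    ∃ QJ QT : C,
      h.deg ((J' : C)) = h.deg ((A' : C)) + h.deg QJ ∧
      h.rkC ((J' : C)) = h.rkC ((A' : C)) + h.rkC QJ ∧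
      h.deg ((T' : C)) = h.deg ((M' : C)) + h.deg QT ∧
      h.rkC ((T' : C)) = h.rkC ((M' : C)) + h.rkC QT ∧
      h.deg QT ≤ h.deg QJ ∧ h.rkC QT = h.rkC QJ ∧ (A' ≠ J' → ¬ IsZero QJ) := by
  obtain ⟨P, hP, heqA⟩ := h.exists_rel hA hJ hAJ
  obtain ⟨NT, hNT, heqM⟩ := h.exists_rel hM hT hMT
  haveI hmono_FP : Mono (F.map P.arrow) := h.strict_mono_F_arrow hP
  haveI hmono_FNT : Mono (F.map NT.arrow) := h.strict_mono_F_arrow hNT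
  haveI hmono_FJ : Mono (F.map J'.arrow) := h.strict_mono_F_arrow hJ
  haveI hmono_FT : Mono (F.map T'.arrow) := h.strict_mono_F_arrow hT
  haveI hmono_PJ : Mono (F.map (P.arrow ≫ J'.arrow)) := by
    rw [F.map_comp]; exact mono_comp _ _
  haveI hmono_NTT : Mono (F.map (NT.arrow ≫ T'.arrow)) := by
    rw [F.map_comp]; exact mono_comp _ _
  obtain ⟨ZJ, qJ, hqJ⟩ := hP
  obtain ⟨ZT, qT, hqT⟩ := hNT
  have EJ := h.F_exact P.arrow qJ hqJ
  have ET := h.F_exact NT.arrow qT hqT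
  haveI hepi_FqJ : Epi (F.map qJ) := EJ.epi_g
  haveI hepi_FqT : Epi (F.map qT) := ET.epi_g
  have hisoA : ((P : C) : C) ≅ ((A' : C)) :=
    (Subobject.underlyingIso _).symm ≪≫ Subobject.isoOfEq _ _ heqA
  have hisoM : ((NT : C) : C) ≅ ((M' : C)) :=
    (Subobject.underlyingIso _).symm ≪≫ Subobject.isoOfEq _ _ heqM
  have hdJ : h.deg ((J' : C)) = h.deg ((A' : C)) + h.deg ZJ := by
    rw [h.deg_additive _ _ hqJ, h.deg_iso hisoA]
  have hrJ : h.rkC ((J' : C)) = h.rkC ((A' : C)) + h.rkC ZJ := by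
    rw [h.sse_rkC hqJ, h.rkC_iso hisoA]
  have hdT : h.deg ((T' : C)) = h.deg ((M' : C)) + h.deg ZT := by
    rw [h.deg_additive _ _ hqT, h.deg_iso hisoM]
  have hrT : h.rkC ((T' : C)) = h.rkC ((M' : C)) + h.rkC ZT := by
    rw [h.sse_rkC hqT, h.rkC_iso hisoM]
  have hQJne : A' ≠ J' → ¬ IsZero ZJ := by
    intro hne hz
    haveI := h.sse_f_isIso hqJ hz
    have h2 : Subobject.mk (P.arrow ≫ J'.arrow) = Subobject.mk J'.arrow :=
      Subobject.mk_eq_mk_of_comm _ _ (asIso P.arrow) rfl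
    rw [Subobject.mk_arrow] at h2
    exact hne (heqA.symm.trans h2)
  -- the comparison morphism φ : ZT ⟶ ZJ
  have hMAmk : Subobject.mk (NT.arrow ≫ T'.arrow) ≤ Subobject.mk (P.arrow ≫ J'.arrow) := by
    rw [heqA, heqM]; exact hMA
  have hNu : NT.arrow ≫ Subobject.ofLE T' J' hTJ = Subobject.ofMkLEMk _ _ hMAmk ≫ P.arrow := by
    apply (cancel_mono J'.arrow).1
    rw [Category.assoc, Category.assoc, Subobject.ofLE_arrow, Subobject.ofMkLEMk_comp]
  have hcz : NT.arrow ≫ Subobject.ofLE T' J' hTJ ≫ qJ = 0 := by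
    rw [← Category.assoc, hNu, Category.assoc, h.sse_comp_zero P.arrow qJ hqJ, comp_zero]
  obtain ⟨hc⟩ := h.sse_isCokernel NT.arrow qT hqT
  obtain ⟨φ, hφ⟩ := CokernelCofork.IsColimit.desc' hc (Subobject.ofLE T' J' hTJ ≫ qJ) hcz
  simp only [Cofork.π_ofπ] at hφ
  haveI hmono_Fu0 : Mono (F.map (Subobject.ofLE T' J' hTJ)) := by
    have hfac : F.map (Subobject.ofLE T' J' hTJ) ≫ F.map J'.arrow = F.map T'.arrow := by
      rw [← F.map_comp, Subobject.ofLE_arrow]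
    exact mono_of_mono_fac hfac
  -- Epi (F.map φ)
  haveI hφepi : Epi (F.map φ) := by
    rw [Preadditive.epi_iff_cancel_zero]
    intro W v hv
    have hi : F.map (Subobject.ofLE T' J' hTJ) ≫ F.map qJ ≫ v = 0 := by
      rw [← Category.assoc, ← F.map_comp, ← hφ, F.map_comp, Category.assoc, hv, comp_zero]
    have hii : F.map P.arrow ≫ F.map qJ ≫ v = 0 := by
      rw [← Category.assoc, ← F.map_comp, h.sse_comp_zero P.arrow qJ hqJ, F.map_zero, zero_comp]
    haveI : Mono ((kernelSubobject (F.map qJ ≫ v)).arrow ≫ F.map J'.arrow) := mono_comp _ _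
    have hT'le : h.FSub T' ≤
        Subobject.mk ((kernelSubobject (F.map qJ ≫ v)).arrow ≫ F.map J'.arrow) := by
      apply imageSubobject_le_mk _ _
        (factorThruKernelSubobject (F.map qJ ≫ v) (F.map (Subobject.ofLE T' J' hTJ)) hi)
      rw [← Category.assoc, factorThruKernelSubobject_comp_arrow, ← F.map_comp,
        Subobject.ofLE_arrow]
    have hA'le : h.FSub A' ≤
        Subobject.mk ((kernelSubobject (F.map qJ ≫ v)).arrow ≫ F.map J'.arrow) := by
      rw [← heqA, h.FSub_mk]
      apply imageSubobject_le_mk _ _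
        (factorThruKernelSubobject (F.map qJ ≫ v) (F.map P.arrow) hii)
      rw [← Category.assoc, factorThruKernelSubobject_comp_arrow, F.map_comp]
    have hJle : h.FSub J' ≤
        Subobject.mk ((kernelSubobject (F.map qJ ≫ v)).arrow ≫ F.map J'.arrow) := by
      rw [← hsup]; exact sup_le hA'le hT'le
    have hmkle : Subobject.mk (F.map J'.arrow) ≤
        Subobject.mk ((kernelSubobject (F.map qJ ≫ v)).arrow ≫ F.map J'.arrow) := by
      rw [← imageSubobject_mono (F.map J'.arrow)]; exact hJle
    have hr : Subobject.ofMkLEMk _ _ hmkle ≫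
        (kernelSubobject (F.map qJ ≫ v)).arrow ≫ F.map J'.arrow = F.map J'.arrow := by
      exact Subobject.ofMkLEMk_comp hmkle
    have hry : Subobject.ofMkLEMk _ _ hmkle ≫ (kernelSubobject (F.map qJ ≫ v)).arrow
        = 𝟙 _ := by
      apply (cancel_mono (F.map J'.arrow)).1
      rw [Category.assoc, hr, Category.id_comp]
    have hw'0 : F.map qJ ≫ v = 0 := by
      rw [← Category.id_comp (F.map qJ ≫ v), ← hry, Category.assoc,
        kernelSubobject_arrow_comp, comp_zero]
    exact (cancel_epi (F.map qJ)).1 (by rw [hw'0, comp_zero])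
  -- Mono (F.map φ)
  haveI hφmono : Mono (F.map φ) := by
    rw [Preadditive.mono_iff_cancel_zero]
    intro W v hv
    have hcond := pullback.condition (f := v) (g := F.map qT)
    haveI : Epi (pullback.fst v (F.map qT)) := inferInstance
    have hpc2 : (pullback.snd v (F.map qT) ≫ F.map (Subobject.ofLE T' J' hTJ)) ≫ F.map qJ
        = 0 := by
      rw [Category.assoc, ← F.map_comp, ← hφ, F.map_comp, ← Category.assoc, ← hcond,
        Category.assoc, hv, comp_zero]
    haveI := EJ.mono_f
    obtain ⟨t0, ht0⟩ := EJ.exact.lift' (pullback.snd v (F.map qT) ≫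
      F.map (Subobject.ofLE T' J' hTJ)) hpc2
    let t : pullback v (F.map qT) ⟶ F.obj ((P : C)) := t0
    have ht : t ≫ F.map P.arrow = pullback.snd v (F.map qT) ≫
        F.map (Subobject.ofLE T' J' hTJ) := ht0
    have hfT : (h.FSub T').Factors (pullback.snd v (F.map qT) ≫ F.map T'.arrow) := by
      rw [h.FSub_def, imageSubobject_mono (F.map T'.arrow)]
      exact mk_factors' _ _ (pullback.snd v (F.map qT)) rfl
    have hfA : (h.FSub A').Factors (pullback.snd v (F.map qT) ≫ F.map T'.arrow) := by
      rw [← heqA, h.FSub_mk, imageSubobject_mono (F.map (P.arrow ≫ J'.arrow))]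
      apply mk_factors' _ _ t
      calc t ≫ F.map (P.arrow ≫ J'.arrow) = (t ≫ F.map P.arrow) ≫ F.map J'.arrow := by
            rw [F.map_comp, Category.assoc]
        _ = pullback.snd v (F.map qT) ≫ F.map (Subobject.ofLE T' J' hTJ) ≫ F.map J'.arrow := by
            rw [ht, Category.assoc]
        _ = pullback.snd v (F.map qT) ≫ F.map T'.arrow := by
            rw [← F.map_comp, Subobject.ofLE_arrow]
    have hfM : (h.FSub M').Factors (pullback.snd v (F.map qT) ≫ F.map T'.arrow) := by
      rw [← hinf]; exact (Subobject.inf_factors _).2 ⟨hfA, hfT⟩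
    have hfM' : (Subobject.mk (F.map (NT.arrow ≫ T'.arrow))).Factors
        (pullback.snd v (F.map qT) ≫ F.map T'.arrow) := by
      rw [← imageSubobject_mono (F.map (NT.arrow ≫ T'.arrow)), ← h.FSub_mk, heqM]
      exact hfM
    obtain ⟨e, he⟩ := mk_factors_elim _ _ hfM'
    have hp2e : pullback.snd v (F.map qT) = e ≫ F.map NT.arrow := by
      apply (cancel_mono (F.map T'.arrow)).1
      rw [Category.assoc, ← F.map_comp, he]
    have hp2qT : pullback.snd v (F.map qT) ≫ F.map qT = 0 := by
      rw [hp2e, Category.assoc, ← F.map_comp, h.sse_comp_zero NT.arrow qT hqT, F.map_zero,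
        comp_zero]
    have hfv : pullback.fst v (F.map qT) ≫ v = 0 := by rw [hcond, hp2qT]
    exact (cancel_epi (pullback.fst v (F.map qT))).1 (by rw [hfv, comp_zero])
  haveI : IsIso (F.map φ) := isIso_of_mono_of_epi _
  exact ⟨ZJ, ZT, hdJ, hrJ, hdT, hrT, h.deg_le_of_FIso φ inferInstance,
    h.rk_iso (asIso (F.map φ)), hQJne⟩

end HNTheory
namespace HNTheory

variable {C D F V}
variable (h : HNTheory C D F V)

/-- The underlying object of the top subobject is isomorphic to the ambient object. -/
noncomputable def topIso (X : C) : (((⊤ : Subobject X) : C)) ≅ X :=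
  asIso (⊤ : Subobject X).arrow

lemma muLE_iff {A B : C} : h.muLE A B ↔ h.rkC B • h.deg A ≤ h.rkC A • h.deg B := Iff.rfl

lemma muLT_iff {A B : C} : h.muLT A B ↔ h.rkC B • h.deg A < h.rkC A • h.deg B := Iff.rfl

lemma not_muLE {A B : C} : ¬ h.muLE A B ↔ h.muLT B A := by
  rw [h.muLE_iff, h.muLT_iff, not_le]

/-- A strict, nonzero subobject of maximal slope among strict nonzero subobjects. -/
def IsMaxStrict {X : C} (S : Subobject X) : Prop :=
  h.StrictSub S ∧ ¬ IsZero ((S : C)) ∧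
    ∀ T : Subobject X, h.StrictSub T → ¬ IsZero ((T : C)) → h.muLE ((T : C)) ((S : C))

lemma exists_maxStrict : ∀ (n : ℕ) (X : C), ¬ IsZero X → h.rkC X ≤ n →
    ∃ S : Subobject X, h.IsMaxStrict S := by
  intro n
  induction n with
  | zero =>
    intro X hX hr
    exact absurd (Nat.le_zero.1 hr) (h.rkC_ne_zero hX)
  | succ n IH =>
    intro X hX hr
    classical
    have htopne : ¬ IsZero (((⊤ : Subobject X) : C)) :=
      fun hz => hX (hz.of_iso (topIso X).symm)
    by_cases hss : ∀ T : Subobject X, h.StrictSub T → ¬IsZero ((T : C)) →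
      h.muLE ((T : C)) (((⊤ : Subobject X) : C))
    · exact ⟨⊤, h.strict_top, htopne, hss⟩
    · push_neg at hss
      obtain ⟨T₀, hT₀s, hT₀ne, hT₀⟩ := hss
      set P : ℕ → Prop := fun r => ∃ T : Subobject X, (h.StrictSub T ∧ ¬IsZero ((T : C)) ∧
        h.muLT (((⊤ : Subobject X) : C)) ((T : C))) ∧ h.rkC ((T : C)) = r with hPdef
      have hbound : ∀ {T : Subobject X}, h.StrictSub T → h.rkC ((T : C)) ≤ h.rkC X := by
        intro T hTs
        have hb := h.rkC_le_of_le hTs (h.strict_top (X := X)) le_top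
        rwa [h.rkC_iso (topIso X)] at hb
      have hP0 : P (h.rkC ((T₀ : C))) := ⟨T₀, ⟨hT₀s, hT₀ne, (h.not_muLE).1 hT₀⟩, rfl⟩
      set m := Nat.findGreatest P (h.rkC X) with hmdef
      have hPm : P m := Nat.findGreatest_spec (hbound hT₀s) hP0
      obtain ⟨A, ⟨hAs, hAne, hAlt⟩, hArk⟩ := hPm
      have hmax : ∀ T : Subobject X, h.StrictSub T → ¬IsZero ((T : C)) →
          h.muLT (((⊤ : Subobject X) : C)) ((T : C)) → h.rkC ((T : C)) ≤ m :=
        fun T hs hne hlt => Nat.le_findGreatest (hbound hs) ⟨T, ⟨hs, hne, hlt⟩, rfl⟩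
      have hAne_top : A ≠ ⊤ := by
        intro he
        rw [he] at hAlt
        exact lt_irrefl _ ((h.muLT_iff).1 hAlt)
      have hAlt_top : A < ⊤ := lt_of_le_of_ne le_top hAne_top
      have hAr_lt : h.rkC ((A : C)) < h.rkC X := by
        have hlt := h.rkC_lt_of_lt hAs (h.strict_top (X := X)) hAlt_top
        rwa [h.rkC_iso (topIso X)] at hlt
      obtain ⟨S₀, hS₀s, hS₀ne, hS₀max⟩ := IH ((A : C)) hAne (by omega)
      have hSs : h.StrictSub (Subobject.mk (S₀.arrow ≫ A.arrow)) := h.strict_comp hAs S₀ hS₀s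
      set S := Subobject.mk (S₀.arrow ≫ A.arrow) with hSdef
      have hSiso : ((S : C) : C) ≅ ((S₀ : C)) := Subobject.underlyingIso _
      have hSne : ¬ IsZero ((S : C)) := fun hz => hS₀ne (hz.of_iso hSiso.symm)
      have hSA : S ≤ A := Subobject.mk_le_of_comm S₀.arrow rfl
      have hdS : h.deg ((S : C)) = h.deg ((S₀ : C)) := h.deg_iso hSiso
      have hrS : h.rkC ((S : C)) = h.rkC ((S₀ : C)) := h.rkC_iso hSiso
      have hwithin : ∀ U : Subobject X, h.StrictSub U → ¬IsZero ((U : C)) → U ≤ A →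
          h.muLE ((U : C)) ((S : C)) := by
        intro U hUs hUne hUA
        obtain ⟨N, hNs, heqN⟩ := h.exists_rel hUs hAs hUA
        have hNiso : ((N : C) : C) ≅ ((U : C)) :=
          (Subobject.underlyingIso _).symm ≪≫ Subobject.isoOfEq _ _ heqN
        have hNne : ¬ IsZero ((N : C)) := fun hz => hUne (hz.of_iso hNiso.symm)
        have hres := (h.muLE_iff).1 (hS₀max N hNs hNne)
        rw [h.muLE_iff, hdS, hrS, ← h.deg_iso hNiso, ← h.rkC_iso hNiso]
        exact hres
      refine ⟨S, hSs, hSne, ?_⟩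
      intro T hTs hTne
      have hAS : h.muLE ((A : C)) ((S : C)) := hwithin A hAs hAne le_rfl
      by_cases hT_le : h.muLE ((T : C)) (((⊤ : Subobject X) : C))
      · have h1 : h.rkC ((A:C)) • h.deg ((T:C)) < h.rkC ((T:C)) • h.deg ((A:C)) :=
          HN.muLT_of_le_lt (h.rkC_ne_zero hTne) (h.rkC_ne_zero htopne)
            ((h.muLE_iff).1 hT_le) ((h.muLT_iff).1 hAlt)
        rw [h.muLE_iff]
        exact (HN.muLT_of_lt_le (h.rkC_ne_zero hAne) (h.rkC_ne_zero hSne) h1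
          ((h.muLE_iff).1 hAS)).le
      · have hTlt : h.muLT (((⊤ : Subobject X) : C)) ((T : C)) := (h.not_muLE).1 hT_le
        have hTrk : h.rkC ((T : C)) ≤ m := hmax T hTs hTne hTlt
        by_cases hTA : T ≤ A
        · exact hwithin T hTs hTne hTA
        · obtain ⟨J, hJs, hFJ⟩ := h.exists_strict (h.FSub A ⊔ h.FSub T)
          obtain ⟨M, hMs, hFM⟩ := h.exists_strict (h.FSub A ⊓ h.FSub T)
          have hAJ : A ≤ J := h.le_of_FSub_le hJs (by rw [hFJ]; exact le_sup_left)
          have hTJ : T ≤ J := h.le_of_FSub_le hJs (by rw [hFJ]; exact le_sup_right)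
          have hMA : M ≤ A := h.le_of_FSub_le hAs (by rw [hFM]; exact inf_le_left)
          have hMT : M ≤ T := h.le_of_FSub_le hTs (by rw [hFM]; exact inf_le_right)
          have hAneJ : A ≠ J := fun he => hTA (he ▸ hTJ)
          obtain ⟨QJ, QT, hdJ, hrJ, hdT, hrT, hdQ, hrQ, hQJne⟩ :=
            h.quot_compare hAs hTs hJs hMs hAJ hTJ hMA hMT (by rw [hFJ]) (by rw [hFM])
          have hJne : ¬ IsZero ((J : C)) := by
            apply h.not_isZero_of_rkC
            have h0 : h.rkC ((A:C)) ≠ 0 := h.rkC_ne_zero hAne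
            omega
          have hJrk : m < h.rkC ((J : C)) := by
            have hlt := h.rkC_lt_of_lt hAs hJs (lt_of_le_of_ne hAJ hAneJ)
            omega
          have hJle : h.muLE ((J : C)) (((⊤ : Subobject X) : C)) := by
            by_contra hc
            exact absurd (hmax J hJs hJne ((h.not_muLE).1 hc)) (by omega)
          have hQJnz : ¬ IsZero QJ := hQJne hAneJ
          have hJA : h.rkC ((A:C)) • h.deg ((J:C)) < h.rkC ((J:C)) • h.deg ((A:C)) :=
            HN.muLT_of_le_lt (h.rkC_ne_zero hJne) (h.rkC_ne_zero htopne)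
              ((h.muLE_iff).1 hJle) ((h.muLT_iff).1 hAlt)
          rw [hrJ] at hJA
          have hQJ_S : h.rkC ((S:C)) • h.deg QJ ≤ h.rkC QJ • h.deg ((S:C)) :=
            HN.arith2 (h.rkC_ne_zero hAne) (h.rkC_ne_zero hSne) hdJ hJA ((h.muLE_iff).1 hAS)
          have hMS : h.rkC ((S:C)) • h.deg ((M:C)) ≤ h.rkC ((M:C)) • h.deg ((S:C)) := by
            by_cases hMz : IsZero ((M : C))
            · rw [h.deg_of_isZero hMz, (h.rkC_eq_zero_iff).2 hMz, smul_zero, zero_smul]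
            · exact (h.muLE_iff).1 (hwithin M hMs hMz hMA)
          rw [hrQ] at hrT
          rw [h.muLE_iff]
          exact HN.arith1 hrT hdT hdQ hQJ_S hMS

end HNTheory

/-- (5.7) Every nonzero object `X` of `C` admits an SCSS: a nonzero strict
subobject which is the final subobject of `X` of maximal slope. -/
theorem stmt17 (h : HNTheory C D F V) (X : C) (hX : ¬ IsZero X) :
    ∃ S : Subobject X, h.StrictSub S ∧ ¬ IsZero ((S : C)) ∧
      h.MaxSlopeSub S ∧ ∀ T : Subobject X, h.MaxSlopeSub T → T ≤ S := by
  classical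
  obtain ⟨S₁, hS₁⟩ := h.exists_maxStrict (h.rkC X) X hX le_rfl
  have hbound : ∀ {T : Subobject X}, h.StrictSub T → h.rkC ((T : C)) ≤ h.rkC X := by
    intro T hTs
    have hb := h.rkC_le_of_le hTs (h.strict_top (X := X)) le_top
    rwa [h.rkC_iso (HNTheory.topIso X)] at hb
  set Q : ℕ → Prop := fun r => ∃ S : Subobject X, h.IsMaxStrict S ∧ h.rkC ((S : C)) = r
    with hQdef
  have hQ0 : Q (h.rkC ((S₁ : C))) := ⟨S₁, hS₁, rfl⟩
  have hQm : Q (Nat.findGreatest Q (h.rkC X)) := Nat.findGreatest_spec (hbound hS₁.1) hQ0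
  obtain ⟨S, hSmax, hSrk⟩ := hQm
  obtain ⟨hSs, hSne, hSmu⟩ := hSmax
  have hrkmax : ∀ T : Subobject X, h.IsMaxStrict T → h.rkC ((T : C)) ≤ h.rkC ((S : C)) := by
    intro T hT
    rw [hSrk]
    exact Nat.le_findGreatest (hbound hT.1) ⟨T, hT, rfl⟩
  have hmuAll : ∀ T : Subobject X, ¬ IsZero ((T : C)) → h.muLE ((T : C)) ((S : C)) := by
    intro T hTne
    obtain ⟨T', hT's, hTT', hrkT, hdT⟩ := h.exists_sat T
    have hT'ne : ¬ IsZero ((T' : C)) :=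
      h.not_isZero_of_rkC (by rw [← hrkT]; exact h.rkC_ne_zero hTne)
    have h1 : h.rkC ((T' : C)) • h.deg ((T : C)) ≤ h.rkC ((T : C)) • h.deg ((T' : C)) := by
      rw [← hrkT]
      exact nsmul_le_nsmul_right hdT _
    rw [h.muLE_iff]
    exact HN.muLE_trans (h.rkC_ne_zero hT'ne) h1 ((h.muLE_iff).1 (hSmu T' hT's hT'ne))
  refine ⟨S, hSs, hSne, ⟨hSne, hmuAll⟩, ?_⟩
  intro T hT
  obtain ⟨hTne, hTall⟩ := hT
  obtain ⟨T', hT's, hTT', hrkT, hdT⟩ := h.exists_sat T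
  have hT'ne : ¬ IsZero ((T' : C)) :=
    h.not_isZero_of_rkC (by rw [← hrkT]; exact h.rkC_ne_zero hTne)
  have hTmuT' : h.rkC ((T' : C)) • h.deg ((T : C)) ≤ h.rkC ((T : C)) • h.deg ((T' : C)) := by
    rw [← hrkT]
    exact nsmul_le_nsmul_right hdT _
  have hST : h.muLE ((S : C)) ((T : C)) := hTall S hSne
  have hST' : h.muLE ((S : C)) ((T' : C)) := by
    rw [h.muLE_iff]
    exact HN.muLE_trans (h.rkC_ne_zero hTne) ((h.muLE_iff).1 hST) hTmuT'
  have hT'S : h.muLE ((T' : C)) ((S : C)) := hSmu T' hT's hT'ne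
  by_cases hT'S_le : T' ≤ S
  · exact le_trans hTT' hT'S_le
  · exfalso
    obtain ⟨J, hJs, hFJ⟩ := h.exists_strict (h.FSub S ⊔ h.FSub T')
    obtain ⟨M, hMs, hFM⟩ := h.exists_strict (h.FSub S ⊓ h.FSub T')
    have hSJ : S ≤ J := h.le_of_FSub_le hJs (by rw [hFJ]; exact le_sup_left)
    have hT'J : T' ≤ J := h.le_of_FSub_le hJs (by rw [hFJ]; exact le_sup_right)
    have hMS_le : M ≤ S := h.le_of_FSub_le hSs (by rw [hFM]; exact inf_le_left)
    have hMT' : M ≤ T' := h.le_of_FSub_le hT's (by rw [hFM]; exact inf_le_right)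
    have hSneJ : S ≠ J := fun he => hT'S_le (he ▸ hT'J)
    obtain ⟨QJ, QT, hdJ, hrJ, hdT2, hrT2, hdQ, hrQ, hQJne⟩ :=
      h.quot_compare hSs hT's hJs hMs hSJ hT'J hMS_le hMT' (by rw [hFJ]) (by rw [hFM])
    have heq : h.rkC ((S : C)) • h.deg ((T' : C)) = h.rkC ((T' : C)) • h.deg ((S : C)) :=
      le_antisymm ((h.muLE_iff).1 hT'S) ((h.muLE_iff).1 hST')
    have hMS2 : h.rkC ((S : C)) • h.deg ((M : C)) ≤ h.rkC ((M : C)) • h.deg ((S : C)) := by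
      by_cases hMz : IsZero ((M : C))
      · rw [h.deg_of_isZero hMz, (h.rkC_eq_zero_iff).2 hMz, smul_zero, zero_smul]
      · exact (h.muLE_iff).1 (hmuAll M hMz)
    rw [hrQ] at hrT2
    have harith : h.rkC QJ • h.deg ((S : C)) ≤ h.rkC ((S : C)) • h.deg QJ :=
      HN.arith3 hrT2 hdT2 hdQ heq hMS2
    have hJS : h.muLE ((S : C)) ((J : C)) := by
      rw [h.muLE_iff, hrJ, hdJ, add_smul, smul_add]
      exact add_le_add_right harith _
    have hJne : ¬ IsZero ((J : C)) := by
      apply h.not_isZero_of_rkC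
      have h0 : h.rkC ((S : C)) ≠ 0 := h.rkC_ne_zero hSne
      omega
    have hJmax : h.IsMaxStrict J := by
      refine ⟨hJs, hJne, fun U hUs hUne => ?_⟩
      rw [h.muLE_iff]
      exact HN.muLE_trans (h.rkC_ne_zero hSne) ((h.muLE_iff).1 (hSmu U hUs hUne))
        ((h.muLE_iff).1 hJS)
    have hrk_le : h.rkC ((J : C)) ≤ h.rkC ((S : C)) := hrkmax J hJmax
    have hrk_lt : h.rkC ((S : C)) < h.rkC ((J : C)) :=
      h.rkC_lt_of_lt hSs hJs (lt_of_le_of_ne hSJ hSneJ)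
    omega
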